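/- Let K be a compact convex set in the plane with diameter ab, |ab| = 2, midpoint o of ab, and let c, d be the intersections of the perpendicular bisector of ab with ∂K with |co| ≥ |do|. If |ad| < |cd|, then |ad| + |ac| > √5. -/
import Mathlib


open Metric

/-- Median length: if `p` is equidistant from `a` and `b`, then by Pythagoras
`|pa|² = |pm|² + (|ab|/2)²` where `m` is the midpoint of `ab`. -/
lemma median_aux (p a b : EuclideanSpace ℝ (Fin 2)) (h : dist p a = dist p b) :
    dist p a ^ 2 = dist p (midpoint ℝ a b) ^ 2 + (dist a b / 2) ^ 2 := by
  have hpar := parallelogram_law_with_norm ℝ (p - a) (p - b)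
  have hm : midpoint ℝ a b + midpoint ℝ a b = a + b := midpoint_add_self ℝ a b
  have h1 : p - a + (p - b) = (2:ℝ) • (p - midpoint ℝ a b) := by
    rw [two_smul, show p - midpoint ℝ a b + (p - midpoint ℝ a b)
        = p + p - (midpoint ℝ a b + midpoint ℝ a b) from by abel, hm]
    abel
  have h2 : p - a - (p - b) = b - a := by abel
  rw [h1, h2, norm_smul] at hpar
  have e1 : dist p a = ‖p - a‖ := dist_eq_norm _ _
  have e2 : dist p b = ‖p - b‖ := dist_eq_norm _ _
  have e3 : dist p (midpoint ℝ a b) = ‖p - midpoint ℝ a b‖ := dist_eq_norm _ _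
  have e4 : dist a b = ‖b - a‖ := by rw [dist_eq_norm, norm_sub_rev]
  simp only [Real.norm_ofNat] at hpar
  rw [e1, e2] at h
  rw [h] at hpar
  rw [e1, e3, e4, h]
  linear_combination - hpar / 4

lemma step_aux (x u s : ℝ) (hu : u ^ 2 = 1 + x ^ 2) (hs2 : s ^ 2 = 5)
    (h : 1 + (u - x) ^ 2 < (s - u) ^ 2) : 2 * u * (s - x) < 4 - x ^ 2 := by
  nlinarith [h, hu, hs2]

lemma poly_aux (x s : ℝ) (hx : 0 ≤ x) (hxs : x ≤ 0.73) (hsl : (2.2360:ℝ) ≤ s)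
    (hsr : s ≤ (2.2361:ℝ)) : (4 - x ^ 2) ^ 2 ≤ 4 * (1 + x ^ 2) * (s - x) ^ 2 := by
  nlinarith [sq_nonneg (x - 0.42), mul_nonneg hx hx, mul_nonneg (mul_nonneg hx hx) hx,
    mul_nonneg (sub_nonneg.2 hxs) hx, mul_nonneg (sub_nonneg.2 hxs) (sub_nonneg.2 hxs),
    mul_nonneg (mul_nonneg (sub_nonneg.2 hxs) hx) hx, sq_nonneg (x^2 - 0.42*x),
    mul_nonneg (sub_nonneg.2 hsl) hx]

set_option maxHeartbeats 1600000 in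
/-- The key scalar inequality: if `u² = 1 + x²`, `v² = 1 + y²` with `x, y, u, v ≥ 0`
and `u < x + y`, then `u + v > √5`. -/
lemma key_ineq (x y u v : ℝ) (hx : 0 ≤ x) (hy : 0 ≤ y) (hu0 : 0 ≤ u) (hv0 : 0 ≤ v)
    (hu : u ^ 2 = 1 + x ^ 2) (hv : v ^ 2 = 1 + y ^ 2) (h : u < x + y) :
    u + v > Real.sqrt 5 := by
  have hs2 : Real.sqrt 5 ^ 2 = 5 := Real.sq_sqrt (by norm_num)
  have hs0 : (0:ℝ) < Real.sqrt 5 := Real.sqrt_pos.2 (by norm_num)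
  set s := Real.sqrt 5 with hs
  have hsl : (2.2360 : ℝ) ≤ s := by nlinarith
  have hsr : s ≤ (2.2361 : ℝ) := by nlinarith
  by_contra hcon
  push_neg at hcon
  have hu1 : 1 ≤ u := by nlinarith
  have hv1 : 1 ≤ v := by nlinarith
  have hus : u ≤ s - 1 := by linarith
  have hux : x < u := by nlinarith
  have hx2 : x ^ 2 ≤ 5 - 2 * s := by nlinarith
  have hxs : x ≤ 0.73 := by nlinarith
  have hyu : u - x < y := by linarith
  have hux0 : 0 ≤ u - x := by linarith
  have hy2 : (u - x) ^ 2 < y ^ 2 := pow_lt_pow_left₀ hyu hux0 two_ne_zero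
  have hv2 : 1 + (u - x) ^ 2 < v ^ 2 := by rw [hv]; linarith
  have hvsu : v ≤ s - u := by linarith
  have hvs : v ^ 2 ≤ (s - u) ^ 2 := pow_le_pow_left₀ hv0 hvsu 2
  have hchain : 1 + (u - x) ^ 2 < (s - u) ^ 2 := lt_of_lt_of_le hv2 hvs
  have hkey : 2 * u * (s - x) < 4 - x ^ 2 := step_aux x u s hu hs2 hchain
  have hA : 0 < 2 * u * (s - x) := by
    have := mul_pos (show (0:ℝ) < u by linarith) (show (0:ℝ) < s - x by linarith)
    linarith
  have hsq : (2 * u * (s - x)) ^ 2 < (4 - x ^ 2) ^ 2 :=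
    pow_lt_pow_left₀ hkey hA.le two_ne_zero
  have hpoly := poly_aux x s hx hxs hsl hsr
  nlinarith [hsq, hpoly, hu]

/-- Let `K` be a planar compact convex body with diameter `ab`, `|ab| = 2`, midpoint `o`
of `ab`, and let `c`, `d` be the intersections of the perpendicular bisector of `ab`
with `∂K`, with `|co| ≥ |do|`. If `|ad| < |cd|` then `|ad| + |ac| > √5`. -/
theorem stmt17 (K : Set (EuclideanSpace ℝ (Fin 2)))
    (hKc : IsCompact K) (hKconv : Convex ℝ K) (hKint : (interior K).Nonempty)
    (a b c d : EuclideanSpace ℝ (Fin 2))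
    (ha : a ∈ K) (hb : b ∈ K) (hab : dist a b = 2) (hdiam : diam K = 2)
    (o : EuclideanSpace ℝ (Fin 2)) (ho : o = midpoint ℝ a b)
    (hc : c ∈ frontier K) (hd : d ∈ frontier K)
    (hcbis : dist c a = dist c b) (hdbis : dist d a = dist d b)
    (hco : dist c o ≥ dist d o)
    (hlt : dist a d < dist c d) :
    dist a d + dist a c > Real.sqrt 5 := by
  have hdpy : dist d a ^ 2 = dist d o ^ 2 + 1 := by
    have := median_aux d a b hdbis
    rw [← ho] at this
    rw [this, hab]; norm_num
  have hcpy : dist c a ^ 2 = dist c o ^ 2 + 1 := by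
    have := median_aux c a b hcbis
    rw [← ho] at this
    rw [this, hab]; norm_num
  have htri : dist c d ≤ dist c o + dist d o := by
    calc dist c d ≤ dist c o + dist o d := dist_triangle c o d
    _ = dist c o + dist d o := by rw [dist_comm o d]
  have hlt' : dist d a < dist d o + dist c o := by
    rw [dist_comm d a]; linarith
  rw [dist_comm a d, dist_comm a c]
  exact key_ineq (dist d o) (dist c o) (dist d a) (dist c a) dist_nonneg dist_nonneg
    dist_nonneg dist_nonneg (by linarith [hdpy]) (by linarith [hcpy]) hlt'
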